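/- arXiv:math/9801096 — 7 statements merged into one kernel-verified Lean document; each statement's English description precedes it below -/
import Mathlib

section
/- In a stable outcome of the RiFle assignment game, if agent p_i is matched to agent q_j, then their joint payoff equals their joint productivity: u_i + v_j = α_{ij} = β_{ij} + γ_{ij}. That is, there are no side payments in stable outcomes. -/
open Finset

/-- The RiFle assignment game: `n` P-agents and `n` Q-agents, prescribed payoff
shares `β i j` (to `p i`) and `γ i j` (to `q j`), each agent rigid or flexible. -/
structure RiFle (n : ℕ) where
  β : Fin n → Fin n → ℝ
  γ : Fin n → Fin n → ℝ
  β_nonneg : ∀ i j, 0 ≤ β i j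
  γ_nonneg : ∀ i j, 0 ≤ γ i j
  rigidP : Fin n → Prop
  rigidQ : Fin n → Prop

namespace RiFle

variable {n : ℕ}

/-- Joint productivity of a pair. -/
def α (G : RiFle n) (i j : Fin n) : ℝ := G.β i j + G.γ i j

/-- A pair is rigid if at least one of its members is rigid. -/
def RigidPair (G : RiFle n) (i j : Fin n) : Prop := G.rigidP i ∨ G.rigidQ j

/-- A (partial) matching of P-agents to Q-agents, given as a partial map from P to Q
that is injective on matched agents. -/
def Matching (μ : Fin n → Option (Fin n)) : Prop :=
  ∀ i i' j, μ i = some j → μ i' = some j → i = i'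

/-- Feasibility of an outcome: individual rationality, rigidity, and Pareto optimality. -/
def Feasible (G : RiFle n) (μ : Fin n → Option (Fin n)) (u v : Fin n → ℝ) : Prop :=
  Matching μ ∧
  (∀ i, 0 ≤ u i) ∧ (∀ j, 0 ≤ v j) ∧
  (∀ i j, μ i = some j → G.rigidP i → u i = G.β i j ∧ (¬ G.rigidQ j → G.γ i j ≤ v j)) ∧
  (∀ i j, μ i = some j → G.rigidQ j → v j = G.γ i j ∧ (¬ G.rigidP i → G.β i j ≤ u i)) ∧
  ((∑ i, u i) + (∑ j, v j) = ∑ i, (μ i).elim 0 (fun j => G.α i j))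

/-- Stability: feasibility plus absence of blocking pairs. -/
def Stable (G : RiFle n) (μ : Fin n → Option (Fin n)) (u v : Fin n → ℝ) : Prop :=
  G.Feasible μ u v ∧
  (∀ i j, ¬ G.RigidPair i j → G.α i j ≤ u i + v j) ∧
  (∀ i j, G.RigidPair i j → G.β i j ≤ u i ∨ G.γ i j ≤ v j)

end RiFle

/-- no side payments in stable outcomes: matched pairs split exactly
their joint productivity. -/
theorem stmt0 {n : ℕ} (G : RiFle n) (μ : Fin n → Option (Fin n)) (u v : Fin n → ℝ)
    (hst : G.Stable μ u v) (i j : Fin n) (hij : μ i = some j) :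
    u i + v j = G.α i j ∧ G.α i j = G.β i j + G.γ i j := by
  obtain ⟨⟨hmatch, hu0, hv0, hrP, hrQ, hpareto⟩, hflex, hrig⟩ := hst
  refine ⟨?_, rfl⟩
  -- pointwise bound: each matched pair gets at least α
  have key : ∀ k, (μ k).elim 0 (fun j' => G.α k j') ≤
      (μ k).elim 0 (fun j' => u k + v j') := by
    intro k
    cases hk : μ k with
    | none => simp
    | some j' =>
      simp only [Option.elim]
      by_cases hR : G.RigidPair k j'
      · rcases hR with hP | hQ
        · obtain ⟨hu, hv⟩ := hrP k j' hk hP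
          by_cases hQ' : G.rigidQ j'
          · obtain ⟨hv', _⟩ := hrQ k j' hk hQ'
            simp [RiFle.α, hu, hv']
          · have := hv hQ'
            simp only [RiFle.α, hu]; linarith
        · obtain ⟨hv', hu'⟩ := hrQ k j' hk hQ
          by_cases hP' : G.rigidP k
          · obtain ⟨hu, _⟩ := hrP k j' hk hP'
            simp [RiFle.α, hu, hv']
          · have := hu' hP'
            simp only [RiFle.α, hv']; linarith
      · exact hflex k j' hR
  -- sum of the v-parts over matched pairs is at most ∑ v
  have sumv : ∑ k, (μ k).elim 0 v ≤ ∑ j', v j' := by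
    have h1 : ∀ k, (μ k).elim (0:ℝ) v = ∑ j', if μ k = some j' then v j' else 0 := by
      intro k
      cases hk : μ k with
      | none => simp
      | some j' => simp
    calc ∑ k, (μ k).elim (0:ℝ) v
        = ∑ k, ∑ j', if μ k = some j' then v j' else 0 := by
          exact Finset.sum_congr rfl fun k _ => h1 k
      _ = ∑ j', ∑ k, if μ k = some j' then v j' else 0 := Finset.sum_comm
      _ ≤ ∑ j', v j' := by
          apply Finset.sum_le_sum
          intro j' _
          have hcard : (Finset.univ.filter (fun k => μ k = some j')).card ≤ 1 := by
            apply Finset.card_le_one.2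
            intro a ha b hb
            simp only [Finset.mem_filter] at ha hb
            exact hmatch a b j' ha.2 hb.2
          rw [← Finset.sum_filter]
          rw [Finset.sum_const]
          interval_cases h : (Finset.univ.filter (fun k => μ k = some j')).card
          · simpa using hv0 j'
          · simp
  have sumu : ∑ k, (μ k).elim 0 (fun _ => u k) ≤ ∑ k, u k := by
    apply Finset.sum_le_sum
    intro k _
    cases hk : μ k with
    | none => simpa using hu0 k
    | some j' => simp
  have split : ∀ k, (μ k).elim (0:ℝ) (fun j' => u k + v j') =
      (μ k).elim 0 (fun _ => u k) + (μ k).elim 0 v := by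
    intro k; cases μ k <;> simp
  have total : ∑ k, (μ k).elim 0 (fun j' => u k + v j') ≤
      ∑ k, (μ k).elim 0 (fun j' => G.α k j') := by
    calc ∑ k, (μ k).elim 0 (fun j' => u k + v j')
        = (∑ k, (μ k).elim 0 (fun _ => u k)) + ∑ k, (μ k).elim 0 v := by
          rw [← Finset.sum_add_distrib]
          exact Finset.sum_congr rfl fun k _ => split k
      _ ≤ (∑ k, u k) + ∑ j', v j' := add_le_add sumu sumv
      _ = ∑ k, (μ k).elim 0 (fun j' => G.α k j') := hpareto
  have hsum_eq : ∑ k, (μ k).elim 0 (fun j' => G.α k j') =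
      ∑ k, (μ k).elim 0 (fun j' => u k + v j') :=
    le_antisymm (Finset.sum_le_sum fun k _ => key k) total
  have heach := (Finset.sum_eq_sum_iff_of_le fun k _ => key k).1 hsum_eq
  have := heach i (Finset.mem_univ i)
  rw [hij] at this
  simpa using this.symm
end

section
/- In the RiFle assignment game, an outcome is in the core (i.e., is undominated by any coalition) if and only if it is a stable outcome. -/
open Finset

namespace RiFle

/-- An outcome is dominated if some nonempty coalition can rematch among itself,
redistributing (respecting rigidity) at most its internal productivity, so that
every member is strictly better off. -/
def Dominated {n : ℕ} (G : RiFle n) (μ : Fin n → Option (Fin n)) (u v : Fin n → ℝ) : Prop :=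
  ∃ (SP SQ : Finset (Fin n)) (μ' : Fin n → Option (Fin n)) (u' v' : Fin n → ℝ),
    Matching μ' ∧ (SP.Nonempty ∨ SQ.Nonempty) ∧
    (∀ i ∈ SP, ∃ j ∈ SQ, μ' i = some j) ∧
    (∀ j ∈ SQ, ∃ i ∈ SP, μ' i = some j) ∧
    (∀ i, 0 ≤ u' i) ∧ (∀ j, 0 ≤ v' j) ∧
    (∀ i ∈ SP, ∀ j ∈ SQ, μ' i = some j →
      (G.rigidP i → u' i = G.β i j) ∧ (G.rigidQ j → v' j = G.γ i j)) ∧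
    ((∑ i ∈ SP, u' i) + (∑ j ∈ SQ, v' j) ≤ ∑ i ∈ SP, (μ' i).elim 0 (fun j => G.α i j)) ∧
    (∀ i ∈ SP, u i < u' i) ∧ (∀ j ∈ SQ, v j < v' j)

end RiFle

/-- the core (feasible undominated outcomes) equals the set of stable
outcomes. -/
theorem stmt1 {n : ℕ} (G : RiFle n) (μ : Fin n → Option (Fin n)) (u v : Fin n → ℝ) :
    (G.Feasible μ u v ∧ ¬ G.Dominated μ u v) ↔ G.Stable μ u v := by
  constructor
  · rintro ⟨hF, hD⟩
    obtain ⟨hM, hu0, hv0, hrP, hrQ, hsum⟩ := hF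
    refine ⟨⟨hM, hu0, hv0, hrP, hrQ, hsum⟩, ?_, ?_⟩
    · intro i j hnr
      by_contra hlt
      push_neg at hlt
      apply hD
      set ε : ℝ := (G.α i j - u i - v j) / 2 with hε
      have hεpos : 0 < ε := by
        have : u i + v j < G.α i j := hlt
        simp only [hε]; linarith
      refine ⟨{i}, {j}, fun k => if k = i then some j else none,
        fun k => if k = i then u i + ε else 0,
        fun k => if k = j then v j + ε else 0, ?_, Or.inl ⟨i, mem_singleton_self i⟩,
        ?_, ?_, ?_, ?_, ?_, ?_, ?_, ?_⟩
      · intro a b c ha hb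
        by_cases h1 : a = i
        · by_cases h2 : b = i
          · rw [h1, h2]
          · simp [h2] at hb
        · simp [h1] at ha
      · intro k hk
        rw [mem_singleton] at hk
        exact ⟨j, mem_singleton_self j, by simp [hk]⟩
      · intro k hk
        rw [mem_singleton] at hk
        exact ⟨i, mem_singleton_self i, by simp [hk]⟩
      · intro k
        by_cases h : k = i <;> simp [h]
        linarith [hu0 i]
      · intro k
        by_cases h : k = j <;> simp [h]
        linarith [hv0 j]
      · intro a ha b hb hab
        rw [mem_singleton] at ha hb
        subst ha; subst hb
        exact ⟨fun h => absurd (Or.inl h) hnr, fun h => absurd (Or.inr h) hnr⟩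
      · simp [RiFle.α] at *
        linarith
      · intro a ha
        rw [mem_singleton] at ha
        subst ha; simp; linarith
      · intro b hb
        rw [mem_singleton] at hb
        subst hb; simp; linarith
    · intro i j hr
      by_contra hlt
      push_neg at hlt
      obtain ⟨hui, hvj⟩ := hlt
      apply hD
      refine ⟨{i}, {j}, fun k => if k = i then some j else none,
        fun k => if k = i then G.β i j else 0,
        fun k => if k = j then G.γ i j else 0, ?_, Or.inl ⟨i, mem_singleton_self i⟩,
        ?_, ?_, ?_, ?_, ?_, ?_, ?_, ?_⟩
      · intro a b c ha hb
        by_cases h1 : a = i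
        · by_cases h2 : b = i
          · rw [h1, h2]
          · simp [h2] at hb
        · simp [h1] at ha
      · intro k hk
        rw [mem_singleton] at hk
        exact ⟨j, mem_singleton_self j, by simp [hk]⟩
      · intro k hk
        rw [mem_singleton] at hk
        exact ⟨i, mem_singleton_self i, by simp [hk]⟩
      · intro k
        by_cases h : k = i <;> simp [h, G.β_nonneg]
      · intro k
        by_cases h : k = j <;> simp [h, G.γ_nonneg]
      · intro a ha b hb hab
        rw [mem_singleton] at ha hb
        subst ha; subst hb
        exact ⟨fun _ => by simp, fun _ => by simp⟩
      · simp [RiFle.α]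
      · intro a ha
        rw [mem_singleton] at ha
        subst ha; simpa using hui
      · intro b hb
        rw [mem_singleton] at hb
        subst hb; simpa using hvj
  · rintro ⟨hF, hflex, hrig⟩
    refine ⟨hF, ?_⟩
    rintro ⟨SP, SQ, μ', u', v', hM', hne, hSP, hSQ, hu'0, hv'0, hrc, hbound, hiu, hiv⟩
    -- g maps each i ∈ SP to its partner
    set g : Fin n → Fin n := fun i => (μ' i).getD i with hg
    have hgmem : ∀ i ∈ SP, g i ∈ SQ ∧ μ' i = some (g i) := by
      intro i hi
      obtain ⟨j, hj, hij⟩ := hSP i hi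
      have hgi : g i = j := by rw [hg]; simp [hij]
      rw [hgi]; exact ⟨hj, hij⟩
    have hSPne : SP.Nonempty := by
      rcases hne with h | h
      · exact h
      · obtain ⟨j, hj⟩ := h
        obtain ⟨i, hi, _⟩ := hSQ j hj
        exact ⟨i, hi⟩
    -- each matched coalition pair strictly beats its productivity
    have hkey : ∀ i ∈ SP, G.α i (g i) < u' i + v' (g i) := by
      intro i hi
      obtain ⟨hjS, hij⟩ := hgmem i hi
      set j := g i
      have hui := hiu i hi
      have hvj := hiv j hjS
      have hrci := hrc i hi j hjS hij
      by_cases hr : G.RigidPair i j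
      · rcases hrig i j hr with hb | hc
        · -- β ≤ u i
          rcases hr with hp | hq
          · have : u' i = G.β i j := hrci.1 hp
            -- u i < u' i = β i j, and β ≤ u i : contradiction? no: β ≤ u i < u' i = β, contra
            exfalso; linarith [this ▸ hui, hb]
          · have hv' : v' j = G.γ i j := hrci.2 hq
            have : G.β i j ≤ u' i := le_of_lt (lt_of_le_of_lt hb hui)
            rw [RiFle.α, hv']
            have h0 := hv' ▸ hvj
            linarith
        · -- γ ≤ v j
          rcases hr with hp | hq
          · have hu' : u' i = G.β i j := hrci.1 hp
            rw [RiFle.α, hu']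
            linarith [lt_of_le_of_lt hc hvj]
          · have hv' : v' j = G.γ i j := hrci.2 hq
            exfalso; linarith [hv' ▸ hvj, hc]
      · have := hflex i j hr
        linarith
    -- sum over SQ of v' equals sum over SP of v' ∘ g
    have hsum_eq : ∑ j ∈ SQ, v' j = ∑ i ∈ SP, v' (g i) := by
      refine (Finset.sum_bij (fun i (hi : i ∈ SP) => g i) ?_ ?_ ?_ ?_).symm
      · intro i hi; exact (hgmem i hi).1
      · intro a ha b hb hab
        have hab' : g a = g b := hab
        exact hM' a b (g a) (hgmem a ha).2 (by rw [hab']; exact (hgmem b hb).2)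
      · intro j hj
        obtain ⟨i, hi, hij⟩ := hSQ j hj
        refine ⟨i, hi, ?_⟩
        have := (hgmem i hi).2
        rw [hij] at this
        exact (Option.some_injective _ this).symm
      · intro i hi; rfl
    have hαsum : ∀ i ∈ SP, (μ' i).elim 0 (fun j => G.α i j) = G.α i (g i) := by
      intro i hi
      rw [(hgmem i hi).2]; rfl
    have hlt : ∑ i ∈ SP, (μ' i).elim 0 (fun j => G.α i j) < (∑ i ∈ SP, u' i) + ∑ j ∈ SQ, v' j := by
      rw [hsum_eq, ← Finset.sum_add_distrib]
      refine Finset.sum_lt_sum_of_nonempty hSPne ?_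
      intro i hi
      rw [hαsum i hi]
      exact hkey i hi
    linarith
end

section
/- If in the RiFle assignment game all agents are flexible, then an outcome is stable if and only if it is a stable outcome of the classical Shapley–Shubik assignment game with productivity matrix α_{ij} = β_{ij} + γ_{ij} (i.e., feasibility plus u_i + v_j ≥ α_{ij} for all i,j). -/
open Finset

/-- Stability in the classical Shapley–Shubik assignment game with productivity
matrix `α`. -/
def AssignStable {n : ℕ} (α : Fin n → Fin n → ℝ) (μ : Fin n → Option (Fin n))
    (u v : Fin n → ℝ) : Prop :=
  RiFle.Matching μ ∧
  (∀ i, 0 ≤ u i) ∧ (∀ j, 0 ≤ v j) ∧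
  (∀ i j, μ i = some j → u i + v j = α i j) ∧
  (∀ i, μ i = none → u i = 0) ∧
  (∀ j, (∀ i, μ i ≠ some j) → v j = 0) ∧
  (∀ i j, α i j ≤ u i + v j)

lemma key {n : ℕ} {μ : Fin n → Option (Fin n)}
    (h : ∀ i i' j, μ i = some j → μ i' = some j → i = i') (g : Fin n → ℝ) :
    ∑ i, (μ i).elim 0 g = ∑ j ∈ Finset.univ.filter (fun j => ∃ i, μ i = some j), g j := by
  classical
  rw [← Finset.sum_filter_add_sum_filter_not Finset.univ (fun i => (μ i).isSome)]
  have h2 : ∑ i ∈ Finset.univ.filter (fun i => ¬ (μ i).isSome), (μ i).elim 0 g = 0 := by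
    apply Finset.sum_eq_zero
    intro i hi
    simp only [Finset.mem_filter, Option.not_isSome_iff_eq_none] at hi
    rw [hi.2]; rfl
  rw [h2, add_zero]
  apply Finset.sum_bij (fun i hi => (μ i).get (by simpa using (Finset.mem_filter.mp hi).2))
  · intro i hi
    simp only [Finset.mem_filter, Finset.mem_univ, true_and]
    exact ⟨i, Option.eq_some_of_isSome _⟩
  · intro i hi i' hi' heq
    have h1 : μ i = some ((μ i).get (by simpa using (Finset.mem_filter.mp hi).2)) :=
      Option.eq_some_of_isSome _
    have h1' : μ i' = some ((μ i).get (by simpa using (Finset.mem_filter.mp hi).2)) := by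
      rw [heq]; exact Option.eq_some_of_isSome _
    exact h i i' _ h1 h1'
  · intro j hj
    simp only [Finset.mem_filter, Finset.mem_univ, true_and] at hj
    obtain ⟨i, hij⟩ := hj
    refine ⟨i, by simp [hij], by simp [hij]⟩
  · intro i hi
    have hs : (μ i).isSome := by simpa using (Finset.mem_filter.mp hi).2
    obtain ⟨j, hj⟩ := Option.isSome_iff_exists.mp hs
    simp [hj]


/-- if all agents are flexible, the RiFle game's stable outcomes are
exactly the stable outcomes of the assignment game with `α = β + γ`. -/
theorem stmt2 {n : ℕ} (G : RiFle n) (hP : ∀ i, ¬ G.rigidP i) (hQ : ∀ j, ¬ G.rigidQ j)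
    (μ : Fin n → Option (Fin n)) (u v : Fin n → ℝ) :
    G.Stable μ u v ↔ AssignStable G.α μ u v := by
  classical
  set T := Finset.univ.filter (fun j => ∃ i, μ i = some j) with hT
  constructor
  · rintro ⟨⟨hm, hu, hv, _, _, hsum⟩, hbl, _⟩
    have hαle : ∀ i j, G.α i j ≤ u i + v j := fun i j =>
      hbl i j (by rintro (h | h); exacts [hP i h, hQ j h])
    -- pointwise inequality
    have hfh : ∀ i, (μ i).elim 0 (G.α i) ≤ u i + (μ i).elim 0 v := by
      intro i
      cases hμ : μ i with
      | none => simpa using hu i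
      | some j => simpa using hαle i j
    have hkey : ∑ i, (μ i).elim 0 v = ∑ j ∈ T, v j := key hm v
    have hsplit : ∑ j, v j = ∑ j ∈ T, v j + ∑ j ∈ Tᶜ, v j := by
      rw [← Finset.sum_add_sum_compl T]
    have hc0 : 0 ≤ ∑ j ∈ Tᶜ, v j := Finset.sum_nonneg fun j _ => hv j
    have hSh : ∑ i, (u i + (μ i).elim 0 v) = (∑ i, u i) + ∑ j ∈ T, v j := by
      rw [Finset.sum_add_distrib, hkey]
    have hEq : ∑ i, (u i + (μ i).elim 0 v) + ∑ j ∈ Tᶜ, v j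
        = ∑ i, (μ i).elim 0 (G.α i) := by
      rw [hSh]; rw [← hsum, hsplit]; ring
    have hle : ∑ i, (μ i).elim 0 (G.α i) ≤ ∑ i, (u i + (μ i).elim 0 v) :=
      Finset.sum_le_sum fun i _ => hfh i
    have hc : ∑ j ∈ Tᶜ, v j = 0 := by linarith
    have hEq' : ∑ i, (u i + (μ i).elim 0 v) = ∑ i, (μ i).elim 0 (G.α i) := by linarith
    have hpt : ∀ i ∈ Finset.univ, u i + (μ i).elim 0 v = (μ i).elim 0 (G.α i) :=
      fun i hi => ((Finset.sum_eq_sum_iff_of_le fun i _ => hfh i).mp hEq'.symm i hi).symm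
    have hvz : ∀ j ∈ Tᶜ, v j = 0 :=
      (Finset.sum_eq_zero_iff_of_nonneg fun j _ => hv j).mp hc
    refine ⟨hm, hu, hv, ?_, ?_, ?_, hαle⟩
    · intro i j hij
      have := hpt i (Finset.mem_univ i)
      rwa [hij] at this
    · intro i hin
      have := hpt i (Finset.mem_univ i)
      rw [hin] at this; simpa using this
    · intro j hj
      apply hvz
      simp only [hT, Finset.mem_compl, Finset.mem_filter, Finset.mem_univ, true_and]
      push_neg
      exact hj
  · rintro ⟨hm, hu, hv, hmatch, hun, hvn, hαle⟩
    have hpt : ∀ i, u i + (μ i).elim 0 v = (μ i).elim 0 (G.α i) := by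
      intro i
      cases hμ : μ i with
      | none => simpa using hun i hμ
      | some j => simpa using hmatch i j hμ
    have hvz : ∀ j ∈ Tᶜ, v j = 0 := by
      intro j hj
      apply hvn
      simp only [hT, Finset.mem_compl, Finset.mem_filter, Finset.mem_univ, true_and] at hj
      push_neg at hj
      exact hj
    have hsum : (∑ i, u i) + (∑ j, v j) = ∑ i, (μ i).elim 0 (G.α i) := by
      have h1 : ∑ j, v j = ∑ j ∈ T, v j := by
        rw [← Finset.sum_add_sum_compl T, Finset.sum_eq_zero hvz, add_zero]
      rw [h1, ← key hm v, ← Finset.sum_add_distrib]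
      exact Finset.sum_congr rfl fun i _ => hpt i
    exact ⟨⟨hm, hu, hv, fun i j _ hr => absurd hr (hP i),
      fun i j _ hr => absurd hr (hQ j), hsum⟩,
      fun i j _ => hαle i j,
      fun i j hr => absurd hr (by rintro (h | h); exacts [hP i h, hQ j h])⟩
end

section
/- In the Shapley–Shubik assignment game, the matching underlying any stable outcome is an optimal assignment, i.e., it maximizes total productivity Σ_{matched (i,j)} α_{ij} over all matchings. -/
open Finset

lemma aux_sum {n : ℕ} (μ : Fin n → Option (Fin n))
    (hμ : ∀ i i' j, μ i = some j → μ i' = some j → i = i')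
    (v : Fin n → ℝ) (hv : ∀ j, 0 ≤ v j) :
    (∑ i, (μ i).elim 0 v ≤ ∑ j, v j) ∧
    ((∀ j, (∀ i, μ i ≠ some j) → v j = 0) → ∑ i, (μ i).elim 0 v = ∑ j, v j) := by
  match n, μ, hμ, v, hv with
  | 0, μ, hμ, v, hv => simp
  | (n+1), μ, hμ, v, hv =>
  set j0 : Fin (n+1) := ⟨0, Nat.succ_pos n⟩
  set S : Finset (Fin (n+1)) := univ.filter fun i => (μ i).isSome with hS
  set T : Finset (Fin (n+1)) := S.image (fun i => (μ i).getD j0) with hT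
  have h1 : ∑ i, (μ i).elim 0 v = ∑ i ∈ S, v ((μ i).getD j0) := by
    rw [show (∑ i, (μ i).elim 0 v) = ∑ i ∈ S, (μ i).elim 0 v from
      (Finset.sum_filter_of_ne (fun i _ h => by
        cases hmi : μ i with
        | none => simp [hmi] at h
        | some j => simp [hmi])).symm]
    refine Finset.sum_congr rfl fun i hi => ?_
    simp only [hS, mem_filter] at hi
    obtain ⟨j, hj⟩ := Option.isSome_iff_exists.mp hi.2
    simp [hj]
  have h2 : ∑ i ∈ S, v ((μ i).getD j0) = ∑ j ∈ T, v j := by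
    rw [hT, Finset.sum_image]
    intro i hi i' hi' hgd
    simp only [hS, Finset.mem_coe, mem_filter] at hi hi'
    obtain ⟨j, hj⟩ := Option.isSome_iff_exists.mp hi.2
    obtain ⟨j', hj'⟩ := Option.isSome_iff_exists.mp hi'.2
    beta_reduce at hgd
    rw [hj, hj'] at hgd
    simp only [Option.getD_some] at hgd
    exact hμ i i' j hj (hgd ▸ hj')
  have hnotT : ∀ j, j ∉ T → ∀ i, μ i ≠ some j := by
    intro j hj i hij
    apply hj
    rw [hT]
    exact Finset.mem_image.mpr ⟨i, by simp [hS, Option.isSome_iff_exists, hij], by simp [hij]⟩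
  constructor
  · rw [h1, h2]
    exact Finset.sum_le_sum_of_subset_of_nonneg (Finset.subset_univ T)
      (fun j _ _ => hv j)
  · intro hv0
    rw [h1, h2]
    exact Finset.sum_subset (Finset.subset_univ T)
      (fun j _ hj => hv0 j (hnotT j hj))

/-- in the Shapley–Shubik assignment game, the matching underlying any
stable outcome maximizes total productivity over all matchings. -/
theorem stmt4 {n : ℕ} (α : Fin n → Fin n → ℝ) (hα : ∀ i j, 0 ≤ α i j)
    (μ : Fin n → Option (Fin n)) (hμ : RiFle.Matching μ) (u v : Fin n → ℝ)
    (hunn : ∀ i, 0 ≤ u i) (hvnn : ∀ j, 0 ≤ v j)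
    (heq : ∀ i j, μ i = some j → u i + v j = α i j)
    (hu0 : ∀ i, μ i = none → u i = 0)
    (hv0 : ∀ j, (∀ i, μ i ≠ some j) → v j = 0)
    (hst : ∀ i j, α i j ≤ u i + v j) :
    ∀ μ' : Fin n → Option (Fin n), RiFle.Matching μ' →
      (∑ i, (μ' i).elim 0 (fun j => α i j)) ≤ ∑ i, (μ i).elim 0 (fun j => α i j) := by
  intro μ' hμ'
  have key : (∑ i, u i) + ∑ j, v j = ∑ i, (μ i).elim 0 (fun j => α i j) := by
    have h1 : ∑ i, (μ i).elim 0 (fun j => α i j) = ∑ i, (u i + (μ i).elim 0 v) := by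
      refine Finset.sum_congr rfl fun i _ => ?_
      cases hmi : μ i with
      | none => simp [hu0 i hmi]
      | some j => simp [heq i j hmi]
    rw [h1, Finset.sum_add_distrib, (aux_sum μ hμ v hvnn).2 hv0]
  calc ∑ i, (μ' i).elim 0 (fun j => α i j)
      ≤ ∑ i, (u i + (μ' i).elim 0 v) := by
        refine Finset.sum_le_sum fun i _ => ?_
        cases hmi : μ' i with
        | none => simpa using hunn i
        | some j => simpa using hst i j
    _ = (∑ i, u i) + ∑ i, (μ' i).elim 0 v := Finset.sum_add_distrib
    _ ≤ (∑ i, u i) + ∑ j, v j := by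
        have := (aux_sum μ' hμ' v hvnn).1
        linarith
    _ = _ := key
end

section
/- In a non-degenerate RiFle assignment game, the matching underlying a stable outcome is uniquely determined by the payoff: if (u,v;μ) and (u,v;μ') are both stable outcomes with the same payoff vectors, then μ = μ'. -/
open Finset

namespace RiFle

variable {n : ℕ}

/-- The total payoff to a coalition `(CP, CQ)` under `μ` is forced if every matched
pair crossing the boundary of the coalition is rigid. -/
def Forced (G : RiFle n) (μ : Fin n → Option (Fin n)) (CP CQ : Finset (Fin n)) : Prop :=
  ∀ i j, μ i = some j → ((i ∈ CP ∧ j ∉ CQ) ∨ (i ∉ CP ∧ j ∈ CQ)) → G.RigidPair i j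

/-- The forced total payoff to a coalition. -/
def ForcedPay (G : RiFle n) (μ : Fin n → Option (Fin n)) (CP CQ : Finset (Fin n)) : ℝ :=
  (∑ i ∈ CP, (μ i).elim 0 (fun j => G.β i j)) +
  (∑ i : Fin n, (μ i).elim 0 (fun j => if j ∈ CQ then G.γ i j else 0))

/-- Non-degeneracy: for any two matchings and any minimal nonempty coalition whose
payoff is forced under both, equality of the forced payoffs implies that the two
matchings coincide on the coalition. -/
def NonDegenerate (G : RiFle n) : Prop :=
  ∀ (μ μ' : Fin n → Option (Fin n)) (CP CQ : Finset (Fin n)),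
    Matching μ → Matching μ' →
    G.Forced μ CP CQ → G.Forced μ' CP CQ →
    (CP.Nonempty ∨ CQ.Nonempty) →
    (∀ CP' CQ' : Finset (Fin n), CP' ⊆ CP → CQ' ⊆ CQ → (CP' ≠ CP ∨ CQ' ≠ CQ) →
      (CP'.Nonempty ∨ CQ'.Nonempty) → ¬ (G.Forced μ CP' CQ' ∧ G.Forced μ' CP' CQ')) →
    G.ForcedPay μ CP CQ = G.ForcedPay μ' CP CQ →
    (∀ i ∈ CP, μ i = μ' i) ∧ (∀ i j, j ∈ CQ → (μ i = some j ↔ μ' i = some j))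

end RiFle


namespace RiFle

variable {n : ℕ}

lemma sum_match (μ : Fin n → Option (Fin n))
    (hM : Matching μ) (f : Fin n → ℝ) :
    ∑ i, (μ i).elim 0 f = ∑ j, if ∃ i, μ i = some j then f j else 0 := by
  have step1 : ∀ i, (μ i).elim 0 f = ∑ j, if μ i = some j then f j else 0 := by
    intro i
    cases h : μ i with
    | none => simp [h]
    | some j0 =>
        simp only [h, Option.elim, Option.some.injEq]
        rw [Finset.sum_ite_eq univ j0 f]
        simp
  calc ∑ i, (μ i).elim 0 f = ∑ i, ∑ j, (if μ i = some j then f j else 0) :=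
        Finset.sum_congr rfl (fun i _ => step1 i)
    _ = ∑ j, ∑ i, (if μ i = some j then f j else 0) := Finset.sum_comm
    _ = ∑ j, if ∃ i, μ i = some j then f j else 0 := by
        refine Finset.sum_congr rfl (fun j _ => ?_)
        by_cases hj : ∃ i, μ i = some j
        · obtain ⟨i0, hi0⟩ := hj
          rw [if_pos ⟨i0, hi0⟩]
          have : ∀ i, (if μ i = some j then f j else 0) = if i = i0 then f j else 0 := by
            intro i
            by_cases h : μ i = some j
            · rw [if_pos h, if_pos (hM i i0 j h hi0)]
            · rw [if_neg h, if_neg]; rintro rfl; exact h hi0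
          rw [Finset.sum_congr rfl (fun i _ => this i), Finset.sum_ite_eq' univ i0 (fun _ => f j)]
          simp
        · rw [if_neg hj]
          exact Finset.sum_eq_zero (fun i _ => by rw [if_neg (fun h => hj ⟨i, h⟩)])

lemma stable_props (G : RiFle n) {μ : Fin n → Option (Fin n)} {u v : Fin n → ℝ}
    (h : G.Stable μ u v) :
    (∀ i j, μ i = some j → u i + v j = G.α i j) ∧
    (∀ i, μ i = none → u i = 0) ∧
    (∀ j, (∀ i, μ i ≠ some j) → v j = 0) ∧
    (∀ i j, μ i = some j → G.RigidPair i j → u i = G.β i j ∧ v j = G.γ i j) := by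
  obtain ⟨⟨hM, hu0, hv0, hrP, hrQ, hsum⟩, hblk, _⟩ := h
  have hge : ∀ i j, μ i = some j → G.α i j ≤ u i + v j := by
    intro i j hij
    by_cases hp : G.rigidP i
    · have h1 := hrP i j hij hp
      by_cases hq : G.rigidQ j
      · have h2 := hrQ i j hij hq
        unfold α; linarith [h1.1, h2.1]
      · have h2 := h1.2 hq
        unfold α; linarith [h1.1]
    · by_cases hq : G.rigidQ j
      · have h2 := hrQ i j hij hq
        have h3 := h2.2 hp
        unfold α; linarith [h2.1]
      · exact hblk i j (by rintro (hh | hh) <;> [exact hp hh; exact hq hh]) 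
  -- sums
  set a : Fin n → ℝ := fun i => (μ i).elim 0 (G.α i) with ha
  set b : Fin n → ℝ := fun i => (μ i).elim 0 (fun j => u i + v j) with hb
  set c : Fin n → ℝ := fun i => (μ i).elim 0 (fun _ => u i) with hc
  set d : Fin n → ℝ := fun i => (μ i).elim 0 (fun j => v j) with hd
  have hab : ∀ i, a i ≤ b i := by
    intro i; simp only [ha, hb]
    cases h : μ i with
    | none => simp
    | some j => simpa using hge i j h
  have hbcd : ∀ i, b i = c i + d i := by
    intro i; simp only [hb, hc, hd]; cases h : μ i <;> simp
  have hcu : ∀ i, c i ≤ u i := by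
    intro i; simp only [hc]; cases h : μ i with
    | none => simpa using hu0 i
    | some j => simp
  have hdsum : ∑ i, d i = ∑ j, if ∃ i, μ i = some j then v j else 0 := sum_match μ hM v
  have hdv : ∑ i, d i ≤ ∑ j, v j := by
    rw [hdsum]
    refine Finset.sum_le_sum (fun j _ => ?_)
    split
    · exact le_refl _
    · exact hv0 j
  have hSa : ∑ i, a i = ∑ i, u i + ∑ j, v j := hsum.symm
  have hSb : ∑ i, b i = ∑ i, c i + ∑ i, d i := by
    rw [← Finset.sum_add_distrib]
    exact Finset.sum_congr rfl (fun i _ => hbcd i)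
  have hSab : ∑ i, a i ≤ ∑ i, b i := Finset.sum_le_sum (fun i _ => hab i)
  have hSc : ∑ i, c i ≤ ∑ i, u i := Finset.sum_le_sum (fun i _ => hcu i)
  have hEab : ∑ i, a i = ∑ i, b i := le_antisymm hSab (by rw [hSb, hSa]; linarith)
  have hEc : ∑ i, c i = ∑ i, u i := by rw [hSb] at hEab; linarith
  have hEd : ∑ i, d i = ∑ j, v j := by rw [hSb] at hEab; linarith
  have habe : ∀ i ∈ univ, a i = b i :=
    ((Finset.sum_eq_sum_iff_of_le (fun i _ => hab i)).mp hEab)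
  have hce : ∀ i ∈ univ, c i = u i :=
    ((Finset.sum_eq_sum_iff_of_le (fun i _ => hcu i)).mp hEc)
  have hA1 : ∀ i j, μ i = some j → u i + v j = G.α i j := by
    intro i j hij
    have := habe i (mem_univ i)
    simp only [ha, hb, hij] at this
    simpa using this.symm
  have hA2 : ∀ i, μ i = none → u i = 0 := by
    intro i hi
    have := hce i (mem_univ i)
    simp only [hc, hi] at this
    simpa using this.symm
  have hA3 : ∀ j, (∀ i, μ i ≠ some j) → v j = 0 := by
    intro j hj
    rw [hdsum] at hEd
    have hde : ∀ j' ∈ univ, (if ∃ i, μ i = some j' then v j' else 0) = v j' := by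
      refine (Finset.sum_eq_sum_iff_of_le (fun j' _ => ?_)).mp hEd
      split
      · exact le_refl _
      · exact hv0 j'
    have := hde j (mem_univ j)
    rw [if_neg (fun ⟨i, hi⟩ => hj i hi)] at this
    exact this.symm
  refine ⟨hA1, hA2, hA3, ?_⟩
  intro i j hij hr
  have h1 := hA1 i j hij
  cases hr with
  | inl hp =>
      have h2 := (hrP i j hij hp).1
      exact ⟨h2, by unfold α at h1; linarith⟩
  | inr hq =>
      have h2 := (hrQ i j hij hq).1
      exact ⟨by unfold α at h1; linarith, h2⟩

lemma forcedPay_eq (G : RiFle n) {μ : Fin n → Option (Fin n)} {u v : Fin n → ℝ}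
    (h : G.Stable μ u v) {CP CQ : Finset (Fin n)} (hF : G.Forced μ CP CQ) :
    G.ForcedPay μ CP CQ = (∑ i ∈ CP, u i) + ∑ j ∈ CQ, v j := by
  obtain ⟨hA1, hA2, hA3, hA4⟩ := stable_props G h
  have hM : Matching μ := h.1.1
  -- rewrite the CQ payoff sum as a sum over i
  have hQ : ∑ j ∈ CQ, v j = ∑ i, (μ i).elim 0 (fun j => if j ∈ CQ then v j else 0) := by
    rw [sum_match μ hM (fun j => if j ∈ CQ then v j else 0)]
    have : ∀ j ∈ univ, (if ∃ i, μ i = some j then (if j ∈ CQ then v j else 0) else 0)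
        = (if j ∈ CQ then v j else 0) := by
      intro j _
      by_cases hj : ∃ i, μ i = some j
      · rw [if_pos hj]
      · rw [if_neg hj]
        have hv : v j = 0 := hA3 j (fun i hi => hj ⟨i, hi⟩)
        by_cases hjQ : j ∈ CQ
        · rw [if_pos hjQ, hv]
        · rw [if_neg hjQ]
    rw [Finset.sum_congr rfl this, Finset.sum_ite_mem, univ_inter]
  have hP : ∀ (f : Fin n → ℝ), ∑ i ∈ CP, f i = ∑ i, if i ∈ CP then f i else 0 := by
    intro f; rw [Finset.sum_ite_mem, univ_inter]
  rw [ForcedPay, hQ, hP (fun i => (μ i).elim 0 (fun j => G.β i j)), hP u,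
    ← Finset.sum_add_distrib, ← Finset.sum_add_distrib]
  refine Finset.sum_congr rfl (fun i _ => ?_)
  cases hij : μ i with
  | none =>
      have hu : u i = 0 := hA2 i hij
      by_cases hi : i ∈ CP <;> simp [hij, hi, hu]
  | some j =>
      simp only [hij, Option.elim]
      by_cases hi : i ∈ CP <;> by_cases hj : j ∈ CQ
      · rw [if_pos hi, if_pos hj, if_pos hi, if_pos hj]
        have := hA1 i j hij
        unfold α at this
        linarith
      · rw [if_pos hi, if_neg hj, if_pos hi, if_neg hj]
        have hr := hF i j hij (Or.inl ⟨hi, hj⟩)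
        have := (hA4 i j hij hr).1
        linarith
      · rw [if_neg hi, if_pos hj, if_neg hi, if_pos hj]
        have hr := hF i j hij (Or.inr ⟨hi, hj⟩)
        have := (hA4 i j hij hr).2
        linarith
      · rw [if_neg hi, if_neg hj, if_neg hi, if_neg hj]

lemma key (G : RiFle n) (hnd : G.NonDegenerate)
    {μ μ' : Fin n → Option (Fin n)} {u v : Fin n → ℝ}
    (h : G.Stable μ u v) (h' : G.Stable μ' u v) :
    ∀ N (CP CQ : Finset (Fin n)), CP.card + CQ.card ≤ N →
      G.Forced μ CP CQ → G.Forced μ' CP CQ →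
      (∀ i ∈ CP, μ i = μ' i) ∧ (∀ i j, j ∈ CQ → (μ i = some j ↔ μ' i = some j)) := by
  have hM : Matching μ := h.1.1
  have hM' : Matching μ' := h'.1.1
  intro N
  induction N with
  | zero =>
      intro CP CQ hcard _ _
      have hP : CP = ∅ := Finset.card_eq_zero.mp (by omega)
      have hQ : CQ = ∅ := Finset.card_eq_zero.mp (by omega)
      subst hP; subst hQ
      exact ⟨fun i hi => absurd hi (Finset.notMem_empty i),
             fun i j hj => absurd hj (Finset.notMem_empty j)⟩
  | succ N IH =>
      intro CP CQ hcard hF hF'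
      by_cases hne : CP.Nonempty ∨ CQ.Nonempty
      · by_cases hmin : ∀ CP' CQ' : Finset (Fin n), CP' ⊆ CP → CQ' ⊆ CQ →
            (CP' ≠ CP ∨ CQ' ≠ CQ) → (CP'.Nonempty ∨ CQ'.Nonempty) →
            ¬ (G.Forced μ CP' CQ' ∧ G.Forced μ' CP' CQ')
        · exact hnd μ μ' CP CQ hM hM' hF hF' hne hmin
            (by rw [forcedPay_eq G h hF, forcedPay_eq G h' hF'])
        · push_neg at hmin
          obtain ⟨CP', CQ', hsP, hsQ, hne', hnem, hT⟩ := hmin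
          have hc1 : CP'.card + CQ'.card ≤ N := by
            have h1 : CP'.card ≤ CP.card := Finset.card_le_card hsP
            have h2 : CQ'.card ≤ CQ.card := Finset.card_le_card hsQ
            have h3 : CP'.card + CQ'.card < CP.card + CQ.card := by
              cases hne' with
              | inl hh =>
                  have := Finset.card_lt_card (Finset.ssubset_iff_subset_ne.mpr ⟨hsP, hh⟩)
                  omega
              | inr hh =>
                  have := Finset.card_lt_card (Finset.ssubset_iff_subset_ne.mpr ⟨hsQ, hh⟩)
                  omega
            omega
          have h1 := IH CP' CQ' hc1 hT.1 hT.2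
          have hFc : G.Forced μ (CP \ CP') (CQ \ CQ') := by
            intro i j hij hcross
            rcases hcross with ⟨hiIn, hjOut⟩ | ⟨hiOut, hjIn⟩
            · obtain ⟨hiCP, hiCP'⟩ := Finset.mem_sdiff.mp hiIn
              by_cases hjCQ : j ∈ CQ
              · have hjCQ' : j ∈ CQ' := by
                  by_contra hh; exact hjOut (Finset.mem_sdiff.mpr ⟨hjCQ, hh⟩)
                exact hT.1 i j hij (Or.inr ⟨hiCP', hjCQ'⟩)
              · exact hF i j hij (Or.inl ⟨hiCP, hjCQ⟩)
            · obtain ⟨hjCQ, hjCQ'⟩ := Finset.mem_sdiff.mp hjIn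
              by_cases hiCP : i ∈ CP
              · have hiCP' : i ∈ CP' := by
                  by_contra hh; exact hiOut (Finset.mem_sdiff.mpr ⟨hiCP, hh⟩)
                exact hT.1 i j hij (Or.inl ⟨hiCP', hjCQ'⟩)
              · exact hF i j hij (Or.inr ⟨hiCP, hjCQ⟩)
          have hFc' : G.Forced μ' (CP \ CP') (CQ \ CQ') := by
            intro i j hij hcross
            rcases hcross with ⟨hiIn, hjOut⟩ | ⟨hiOut, hjIn⟩
            · obtain ⟨hiCP, hiCP'⟩ := Finset.mem_sdiff.mp hiIn
              by_cases hjCQ : j ∈ CQ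
              · have hjCQ' : j ∈ CQ' := by
                  by_contra hh; exact hjOut (Finset.mem_sdiff.mpr ⟨hjCQ, hh⟩)
                exact hT.2 i j hij (Or.inr ⟨hiCP', hjCQ'⟩)
              · exact hF' i j hij (Or.inl ⟨hiCP, hjCQ⟩)
            · obtain ⟨hjCQ, hjCQ'⟩ := Finset.mem_sdiff.mp hjIn
              by_cases hiCP : i ∈ CP
              · have hiCP' : i ∈ CP' := by
                  by_contra hh; exact hiOut (Finset.mem_sdiff.mpr ⟨hiCP, hh⟩)
                exact hT.2 i j hij (Or.inl ⟨hiCP', hjCQ'⟩)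
              · exact hF' i j hij (Or.inr ⟨hiCP, hjCQ⟩)
          have hc2 : (CP \ CP').card + (CQ \ CQ').card ≤ N := by
            rw [Finset.card_sdiff_of_subset hsP, Finset.card_sdiff_of_subset hsQ]
            have h1 : CP'.card ≤ CP.card := Finset.card_le_card hsP
            have h2 : CQ'.card ≤ CQ.card := Finset.card_le_card hsQ
            have h3 : 1 ≤ CP'.card + CQ'.card := by
              cases hnem with
              | inl hh => have := Finset.Nonempty.card_pos hh; omega
              | inr hh => have := Finset.Nonempty.card_pos hh; omega
            omega
          have h2 := IH (CP \ CP') (CQ \ CQ') hc2 hFc hFc'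
          refine ⟨fun i hi => ?_, fun i j hj => ?_⟩
          · by_cases hi' : i ∈ CP'
            · exact h1.1 i hi'
            · exact h2.1 i (Finset.mem_sdiff.mpr ⟨hi, hi'⟩)
          · by_cases hj' : j ∈ CQ'
            · exact h1.2 i j hj'
            · exact h2.2 i j (Finset.mem_sdiff.mpr ⟨hj, hj'⟩)
      · push_neg at hne
        obtain ⟨hP, hQ⟩ := hne
        subst hP; subst hQ
        exact ⟨fun i hi => absurd hi (Finset.notMem_empty i),
               fun i j hj => absurd hj (Finset.notMem_empty j)⟩

end RiFle

/-- in a non-degenerate game, the matching of a stable outcome is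
uniquely determined by the payoff. -/
theorem stmt7 {n : ℕ} (G : RiFle n) (hnd : G.NonDegenerate)
    (μ μ' : Fin n → Option (Fin n)) (u v : Fin n → ℝ)
    (h : G.Stable μ u v) (h' : G.Stable μ' u v) : μ = μ' := by
  have hF : G.Forced μ Finset.univ Finset.univ := by
    intro i j _ hcross
    rcases hcross with ⟨_, hj⟩ | ⟨hi, _⟩
    · exact absurd (Finset.mem_univ j) hj
    · exact absurd (Finset.mem_univ i) hi
  have hF' : G.Forced μ' Finset.univ Finset.univ := by
    intro i j _ hcross
    rcases hcross with ⟨_, hj⟩ | ⟨hi, _⟩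
    · exact absurd (Finset.mem_univ j) hj
    · exact absurd (Finset.mem_univ i) hi
  have hkey := RiFle.key G hnd h h'
    ((Finset.univ : Finset (Fin n)).card + (Finset.univ : Finset (Fin n)).card)
    Finset.univ Finset.univ le_rfl hF hF'
  funext i
  exact hkey.1 i (Finset.mem_univ i)
end

section
/- In a non-degenerate RiFle assignment game, given two stable outcomes, consider the graph G(μ,μ') on P ∪ Q whose edges are the matched pairs of μ and μ' (with unmatched agents matched to rigid dummy partners). Then no edge is preferred by both of its endpoints; equivalently, no edge becomes bidirected when each edge (p_i,q_j) is directed toward q_j if p_i strictly prefers it to his other edge, and toward p_i if q_j strictly prefers it. -/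
open Finset

namespace RiFle

lemma sum_partial_le {n : ℕ} (v : Fin n → ℝ) (hv : ∀ j, 0 ≤ v j)
    (μ : Fin n → Option (Fin n)) (hμ : Matching μ) :
    ∑ i, (μ i).elim 0 (fun j => v j) ≤ ∑ j, v j := by
  have h1 : ∀ i, (μ i).elim 0 (fun j => v j) = ∑ j, if μ i = some j then v j else 0 := by
    intro i
    cases hm : μ i with
    | none => simp [hm]
    | some j0 => simp [hm]
  calc ∑ i, (μ i).elim 0 (fun j => v j)
      = ∑ i, ∑ j, if μ i = some j then v j else 0 := by
        exact Finset.sum_congr rfl (fun i _ => h1 i)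
    _ = ∑ j, ∑ i, if μ i = some j then v j else 0 := Finset.sum_comm
    _ ≤ ∑ j, v j := by
        apply Finset.sum_le_sum
        intro j _
        by_cases hex : ∃ i, μ i = some j
        · obtain ⟨i0, hi0⟩ := hex
          have hfil : Finset.univ.filter (fun i => μ i = some j) = {i0} := by
            ext i
            simp only [Finset.mem_filter, Finset.mem_univ, true_and, Finset.mem_singleton]
            constructor
            · intro hh; exact hμ i i0 j hh hi0
            · rintro rfl; exact hi0
          rw [← Finset.sum_filter, hfil, Finset.sum_singleton]
        · have hz : ∀ i, (if μ i = some j then v j else 0) = 0 := by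
            intro i; exact if_neg (fun hh => hex ⟨i, hh⟩)
          simp only [hz, Finset.sum_const_zero]
          exact hv j

lemma pair_split {n : ℕ} (G : RiFle n) {μ : Fin n → Option (Fin n)} {u v : Fin n → ℝ}
    (h : G.Stable μ u v) : ∀ i j, μ i = some j → u i + v j = G.α i j := by
  obtain ⟨⟨hμ, hu, hv, hrP, hrQ, hsum⟩, hns, hrs⟩ := h
  have step1 : ∀ i j, μ i = some j → G.α i j ≤ u i + v j := by
    intro i j hij
    by_cases hr : G.RigidPair i j
    · rcases hr with hp | hq
      · obtain ⟨hui, hvj⟩ := hrP i j hij hp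
        by_cases hq : G.rigidQ j
        · obtain ⟨hvj', _⟩ := hrQ i j hij hq
          simp [α, hui, hvj']
        · have := hvj hq; simp only [α, hui]; linarith
      · obtain ⟨hvj, hui⟩ := hrQ i j hij hq
        by_cases hp : G.rigidP i
        · obtain ⟨hui', _⟩ := hrP i j hij hp; simp [α, hui', hvj]
        · have := hui hp; simp only [α, hvj]; linarith
    · exact hns i j hr
  have hab : ∀ i, (μ i).elim 0 (fun j => G.α i j) ≤ u i + (μ i).elim 0 (fun j => v j) := by
    intro i
    cases hm : μ i with
    | none => simpa using hu i
    | some j0 => simpa using step1 i j0 hm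
  have hsb : ∑ i, (u i + (μ i).elim 0 (fun j => v j))
      ≤ ∑ i, (μ i).elim 0 (fun j => G.α i j) := by
    rw [Finset.sum_add_distrib, ← hsum]
    have := sum_partial_le v hv μ hμ
    linarith
  intro i j hij
  by_contra hne
  have hlt : (μ i).elim 0 (fun j => G.α i j) < u i + (μ i).elim 0 (fun j => v j) := by
    have ha : (μ i).elim 0 (fun j => G.α i j) = G.α i j := by simp [hij]
    have hb : u i + (μ i).elim 0 (fun j => v j) = u i + v j := by simp [hij]
    rw [ha, hb]
    exact lt_of_le_of_ne (step1 i j hij) (fun hh => hne hh.symm)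
  have := Finset.sum_lt_sum (fun i _ => hab i) ⟨i, Finset.mem_univ i, hlt⟩
  linarith

lemma no_bidirected {n : ℕ} (G : RiFle n) {μ μ' : Fin n → Option (Fin n)}
    {u v u' v' : Fin n → ℝ} (h : G.Stable μ u v) (h' : G.Stable μ' u' v') :
    ∀ i j, μ i = some j → ¬ (u' i < u i ∧ v' j < v j) := by
  intro i j hij ⟨h1, h2⟩
  have heq := pair_split G h i j hij
  by_cases hr : G.RigidPair i j
  · have hβγ : u i = G.β i j ∧ v j = G.γ i j := by
      rcases hr with hp | hq
      · have hb := (h.1.2.2.2.1 i j hij hp).1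
        refine ⟨hb, ?_⟩
        have : u i + v j = G.β i j + G.γ i j := heq
        linarith
      · have hg := (h.1.2.2.2.2.1 i j hij hq).1
        refine ⟨?_, hg⟩
        have : u i + v j = G.β i j + G.γ i j := heq
        linarith
    rcases h'.2.2 i j hr with hb | hg
    · linarith [hβγ.1]
    · linarith [hβγ.2]
  · have := h'.2.1 i j hr
    rw [← heq] at this
    linarith

end RiFle

/-- given two stable outcomes of a non-degenerate game, no matched pair
of either outcome is strictly preferred by both of its endpoints (no edge of
`G(μ,μ')` becomes bidirected). -/
theorem stmt8 {n : ℕ} (G : RiFle n) (hnd : G.NonDegenerate)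
    (μ μ' : Fin n → Option (Fin n)) (u v u' v' : Fin n → ℝ)
    (h : G.Stable μ u v) (h' : G.Stable μ' u' v') :
    (∀ i j, μ i = some j → ¬ (u' i < u i ∧ v' j < v j)) ∧
    (∀ i j, μ' i = some j → ¬ (u i < u' i ∧ v j < v' j)) := by
  exact ⟨RiFle.no_bidirected G h h', RiFle.no_bidirected G h' h⟩
end

section
/- In a non-degenerate RiFle assignment game, an indifferent agent in G(μ,μ') cannot be strictly preferred by a flexible partner: if p_i is matched to q_j in μ, u_i = u'_i, and v_j > v'_j, then q_j is rigid. -/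
open Finset

namespace RiFle

/-- In a stable outcome, every matched pair earns at least its joint productivity. -/
lemma stable_pair_ge {n : ℕ} (G : RiFle n) {μ : Fin n → Option (Fin n)} {u v : Fin n → ℝ}
    (h : G.Stable μ u v) : ∀ i j, μ i = some j → G.α i j ≤ u i + v j := by
  intro i j hm
  by_cases hpi : G.rigidP i
  · have h1 := h.1.2.2.2.1 i j hm hpi
    by_cases hqj : G.rigidQ j
    · have h2 := h.1.2.2.2.2.1 i j hm hqj
      simp [RiFle.α, h1.1, h2.1]
    · have := h1.2 hqj
      simp only [RiFle.α, h1.1]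
      linarith
  · by_cases hqj : G.rigidQ j
    · have h2 := h.1.2.2.2.2.1 i j hm hqj
      have := h2.2 hpi
      simp only [RiFle.α, h2.1]
      linarith
    · exact h.2.1 i j (by simp [RiFle.RigidPair, hpi, hqj])

/-- In a stable outcome, matched pairs split exactly their joint productivity and
unmatched P-agents earn zero. -/
lemma stable_key {n : ℕ} (G : RiFle n) {μ : Fin n → Option (Fin n)} {u v : Fin n → ℝ}
    (h : G.Stable μ u v) :
    (∀ i j, μ i = some j → u i + v j = G.α i j) ∧ (∀ i, μ i = none → u i = 0) := by
  have hmatch := h.1.1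
  have hu := h.1.2.1
  have hv := h.1.2.2.1
  have hsum := h.1.2.2.2.2.2
  have hge := G.stable_pair_ge h
  set g : Fin n → ℝ := fun i => u i + (μ i).elim 0 (fun j => v j) - (μ i).elim 0 (fun j => G.α i j) with hg
  have hgnn : ∀ i, 0 ≤ g i := by
    intro i
    simp only [hg]
    cases hmi : μ i with
    | none => simpa using hu i
    | some j =>
      have := hge i j hmi
      simp only [Option.elim]
      linarith
  have hvsum : (∑ i, (μ i).elim 0 (fun j => v j)) ≤ ∑ j, v j := by
    have h1 : ∀ i, (μ i).elim 0 (fun j => v j) = ∑ j, if μ i = some j then v j else 0 := by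
      intro i
      cases hmi : μ i with
      | none => simp
      | some j => simp
    rw [Finset.sum_congr rfl (fun i _ => h1 i), Finset.sum_comm]
    apply Finset.sum_le_sum
    intro j _
    have hcard : (Finset.univ.filter (fun i => μ i = some j)).card ≤ 1 := by
      apply Finset.card_le_one.mpr
      intro a ha b hb
      exact hmatch a b j (by simpa using ha) (by simpa using hb)
    calc ∑ i, (if μ i = some j then v j else 0)
        = (Finset.univ.filter (fun i => μ i = some j)).card • v j := by
          rw [← Finset.sum_filter, Finset.sum_const]
      _ ≤ v j := by
          rcases Nat.le_one_iff_eq_zero_or_eq_one.mp hcard with h0 | h0 <;>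
            simp [h0, hv j]
  have hgsum : ∑ i, g i ≤ 0 := by
    have : ∑ i, g i =
        (∑ i, u i) + (∑ i, (μ i).elim 0 (fun j => v j)) - ∑ i, (μ i).elim 0 (fun j => G.α i j) := by
      simp [hg, Finset.sum_add_distrib, Finset.sum_sub_distrib]
    rw [this]
    linarith
  have hsum0 : ∑ i, g i = 0 :=
    le_antisymm hgsum (Finset.sum_nonneg fun i _ => hgnn i)
  have hzero : ∀ i, g i = 0 := by
    intro i
    exact (Finset.sum_eq_zero_iff_of_nonneg (fun i _ => hgnn i)).mp hsum0 i (Finset.mem_univ i)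
  constructor
  · intro i j hm
    have := hzero i
    simp only [hg, hm, Option.elim] at this
    linarith
  · intro i hm
    have := hzero i
    simp only [hg, hm, Option.elim] at this
    linarith

end RiFle

/-- in a non-degenerate game, an indifferent agent cannot be strictly
preferred by a flexible partner: if `p i` is matched to `q j` in `μ`, `p i` is
indifferent and `q j` strictly prefers `μ`, then `q j` is rigid. -/
theorem stmt9 {n : ℕ} (G : RiFle n) (hnd : G.NonDegenerate)
    (μ μ' : Fin n → Option (Fin n)) (u v u' v' : Fin n → ℝ)
    (h : G.Stable μ u v) (h' : G.Stable μ' u' v')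
    (i j : Fin n) (hij : μ i = some j) (hind : u i = u' i) (hpref : v' j < v j) :
    G.rigidQ j := by
  by_contra hqj
  have hkey := G.stable_key h
  have hkey' := G.stable_key h'
  have heq : u i + v j = G.α i j := hkey.1 i j hij
  by_cases hpi : G.rigidP i
  · -- p i rigid: use non-degeneracy with coalition ({i}, ∅)
    have hui : u i = G.β i j := (h.1.2.2.2.1 i j hij hpi).1
    have hvj : v j = G.γ i j := by
      simp only [RiFle.α] at heq; linarith
    have hforced : G.Forced μ {i} ∅ := by
      intro i' j' hm hcross
      rcases hcross with ⟨hi', _⟩ | ⟨_, hj'⟩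
      · have : i' = i := Finset.mem_singleton.mp hi'
        subst this
        exact Or.inl hpi
      · exact absurd hj' (Finset.notMem_empty j')
    have hforced' : G.Forced μ' {i} ∅ := by
      intro i' j' hm hcross
      rcases hcross with ⟨hi', _⟩ | ⟨_, hj'⟩
      · have : i' = i := Finset.mem_singleton.mp hi'
        subst this
        exact Or.inl hpi
      · exact absurd hj' (Finset.notMem_empty j')
    have hpay : G.ForcedPay μ {i} ∅ = G.ForcedPay μ' {i} ∅ := by
      have h2 : ∀ (ν : Fin n → Option (Fin n)),
          (∑ i' : Fin n, (ν i').elim 0 (fun j' => if j' ∈ (∅ : Finset (Fin n)) then G.γ i' j' else 0)) = 0 := by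
        intro ν
        apply Finset.sum_eq_zero
        intro i' _
        cases ν i' <;> simp
      have hL : G.ForcedPay μ {i} ∅ = G.β i j := by
        rw [RiFle.ForcedPay, h2 μ, add_zero, Finset.sum_singleton, hij]
        rfl
      have hR : G.ForcedPay μ' {i} ∅ = u' i := by
        simp only [RiFle.ForcedPay, h2, add_zero, Finset.sum_singleton]
        cases hmi' : μ' i with
        | none => simp [hkey'.2 i hmi']
        | some j'' =>
          have := (h'.1.2.2.2.1 i j'' hmi' hpi).1
          simp [this]
      rw [hL, hR, ← hind, hui]
    have hmin : ∀ CP' CQ' : Finset (Fin n), CP' ⊆ {i} → CQ' ⊆ ∅ →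
        (CP' ≠ {i} ∨ CQ' ≠ ∅) → (CP'.Nonempty ∨ CQ'.Nonempty) →
        ¬ (G.Forced μ CP' CQ' ∧ G.Forced μ' CP' CQ') := by
      intro CP' CQ' hsub hsub' hne hnonempty _
      have hCQ' : CQ' = ∅ := Finset.subset_empty.mp hsub'
      rcases Finset.subset_singleton_iff.mp hsub with hCP' | hCP'
      · rcases hnonempty with ⟨x, hx⟩ | ⟨x, hx⟩
        · rw [hCP'] at hx; exact Finset.notMem_empty x hx
        · rw [hCQ'] at hx; exact Finset.notMem_empty x hx
      · rcases hne with hne | hne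
        · exact hne hCP'
        · exact hne hCQ'
    have hconc := hnd μ μ' {i} ∅ h.1.1 h'.1.1 hforced hforced'
      (Or.inl ⟨i, Finset.mem_singleton_self i⟩) hmin hpay
    have hij' : μ' i = some j := by
      rw [← hconc.1 i (Finset.mem_singleton_self i)]; exact hij
    have hv'j : G.γ i j ≤ v' j := (h'.1.2.2.2.1 i j hij' hpi).2 hqj
    linarith [hpref, hvj]
  · -- both flexible: (i, j) blocks μ'
    have hblock : G.α i j ≤ u' i + v' j :=
      h'.2.1 i j (by simp [RiFle.RigidPair, hpi, hqj])
    rw [← hind] at hblock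
    linarith
end
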